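/- Let H be the digraph on {a,b,c} with edges (a,b),(b,a),(b,b),(b,c) (the digraph H₄: undirected edge ab, self-loop at b, directed edge b→c). Then c is a ∀-canon of H, and for every prenex {∃,∀,∧,∨}-sentence φ: H ⊨ φ if and only if H ⊨ φ[∀/c, ∃/b], where all universal variables are instantiated as c and all existential variables as b. -/
import Mathlib


/-- Quantifier-free positive equality-free formulas over the digraph signature,
with `n` free variables. -/
inductive QF : ℕ → Type
  | atom {n : ℕ} (i j : Fin n) : QF n
  | conj {n : ℕ} (φ ψ : QF n) : QF n
  | disj {n : ℕ} (φ ψ : QF n) : QF n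

/-- Prenex positive equality-free first-order formulas over the digraph signature. -/
inductive PFO : ℕ → Type
  | qf  {n : ℕ} (φ : QF n) : PFO n
  | ex  {n : ℕ} (φ : PFO (n + 1)) : PFO n
  | all {n : ℕ} (φ : PFO (n + 1)) : PFO n

def QF.eval {V : Type*} (E : V → V → Prop) : {n : ℕ} → QF n → (Fin n → V) → Prop
  | _, .atom i j, ρ => E (ρ i) (ρ j)
  | _, .conj φ ψ, ρ => φ.eval E ρ ∧ ψ.eval E ρ
  | _, .disj φ ψ, ρ => φ.eval E ρ ∨ ψ.eval E ρ

/-- Evaluation of a prenex formula, where `u = some x` means every universal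
variable is instantiated as `x` (instead of being genuinely universally
quantified), and `e = some y` means every existential variable is instantiated
as `y`. `none` means genuine quantification. -/
def PFO.eval {V : Type*} (E : V → V → Prop) (u e : Option V) :
    {n : ℕ} → PFO n → (Fin n → V) → Prop
  | _, .qf φ, ρ => φ.eval E ρ
  | _, .ex φ, ρ =>
      match e with
      | none => ∃ v, φ.eval E u e (Fin.snoc ρ v)
      | some y => φ.eval E u e (Fin.snoc ρ y)
  | _, .all φ, ρ =>
      match u with
      | none => ∀ v, φ.eval E u e (Fin.snoc ρ v)
      | some x => φ.eval E u e (Fin.snoc ρ x)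

/-- Satisfaction of a prenex sentence by the digraph `(V, E)`, with optional
instantiation of the universal (`u`) and existential (`e`) variables. -/
def PFO.Sat {V : Type*} (E : V → V → Prop) (u e : Option V) (φ : PFO 0) : Prop :=
  φ.eval E u e (fun i => i.elim0)

/-- The digraph `H₄` on `{a, b, c} = {0, 1, 2}`: edges `(a,b), (b,a), (b,b), (b,c)`. -/
def H4E (x y : Fin 3) : Prop :=
  (x = 0 ∧ y = 1) ∨ (x = 1 ∧ y = 0) ∨ (x = 1 ∧ y = 1) ∨ (x = 1 ∧ y = 2)

lemma H4E_one (y : Fin 3) : H4E 1 y := by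
  fin_cases y <;> simp [H4E]

lemma H4E_not_two (y : Fin 3) : ¬ H4E 2 y := by
  simp [H4E]

lemma qflem1 : ∀ {n : ℕ} (ψ : QF n) (ρ ρ' : Fin n → Fin 3),
    (∀ i, (ρ' i = 1 ∨ ρ' i = 2) ∧ (ρ' i = 1 → ρ i = 1)) →
    QF.eval H4E ψ ρ' → QF.eval H4E ψ ρ := by
  intro n ψ ρ ρ' h
  induction ψ with
  | atom i j =>
    intro hE
    rcases (h i).1 with h1 | h2
    · rw [QF.eval, (h i).2 h1]; exact H4E_one _
    · rw [QF.eval, h2] at hE; exact absurd hE (H4E_not_two _)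
  | conj φ₁ φ₂ ih1 ih2 =>
    intro hE; rw [QF.eval] at hE ⊢; exact ⟨ih1 hE.1, ih2 hE.2⟩
  | disj φ₁ φ₂ ih1 ih2 =>
    intro hE; rw [QF.eval] at hE ⊢; exact hE.imp ih1 ih2

lemma qflem2 : ∀ {n : ℕ} (ψ : QF n) (ρ ρ' : Fin n → Fin 3),
    (∀ i, (ρ' i = 1 ∨ ρ' i = 2) ∧ (ρ' i = 2 → ρ i = 2)) →
    QF.eval H4E ψ ρ → QF.eval H4E ψ ρ' := by
  intro n ψ ρ ρ' h
  induction ψ with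
  | atom i j =>
    intro hE
    rcases (h i).1 with h1 | h2
    · rw [QF.eval, h1]; exact H4E_one _
    · rw [QF.eval, (h i).2 h2] at hE; exact absurd hE (H4E_not_two _)
  | conj φ₁ φ₂ ih1 ih2 =>
    intro hE; rw [QF.eval] at hE ⊢; exact ⟨ih1 hE.1, ih2 hE.2⟩
  | disj φ₁ φ₂ ih1 ih2 =>
    intro hE; rw [QF.eval] at hE ⊢; exact hE.imp ih1 ih2

lemma lem1 : ∀ {n : ℕ} (φ : PFO n) (ρ ρ' : Fin n → Fin 3),
    (∀ i, (ρ' i = 1 ∨ ρ' i = 2) ∧ (ρ' i = 1 → ρ i = 1)) →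
    PFO.eval H4E (some 2) (some 1) φ ρ' → PFO.eval H4E none none φ ρ := by
  intro n φ
  induction φ with
  | qf ψ => intro ρ ρ' h hE; exact qflem1 ψ ρ ρ' h hE
  | ex φ ih =>
    intro ρ ρ' h hE
    exact ⟨1, ih _ _ (fun i => Fin.lastCases (by simp) (fun i => by simpa using h i) i) hE⟩
  | all φ ih =>
    intro ρ ρ' h hE v
    exact ih _ _ (fun i => Fin.lastCases (by simp) (fun i => by simpa using h i) i) hE

lemma lem2 : ∀ {n : ℕ} (φ : PFO n) (ρ ρ' : Fin n → Fin 3),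
    (∀ i, (ρ' i = 1 ∨ ρ' i = 2) ∧ (ρ' i = 2 → ρ i = 2)) →
    PFO.eval H4E none none φ ρ → PFO.eval H4E (some 2) (some 1) φ ρ' := by
  intro n φ
  induction φ with
  | qf ψ => intro ρ ρ' h hE; exact qflem2 ψ ρ ρ' h hE
  | ex φ ih =>
    intro ρ ρ' h hE
    obtain ⟨v, hv⟩ := hE
    exact ih _ _ (fun i => Fin.lastCases (by simp) (fun i => by simpa using h i) i) hv
  | all φ ih =>
    intro ρ ρ' h hE
    exact ih _ _ (fun i => Fin.lastCases (by simp) (fun i => by simpa using h i) i) (hE 2)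

/-- in `H₄`, the vertex `c = 2` is a ∀-canon, and a prenex positive
equality-free sentence holds in `H₄` iff it holds with every universal variable
instantiated as `c = 2` and every existential variable as `b = 1`. -/
theorem stmt11 :
    (∀ v, (H4E 2 v → ∀ z, H4E z v) ∧ (H4E v 2 → ∀ z, H4E v z)) ∧
    ∀ φ : PFO 0, PFO.Sat H4E none none φ ↔ PFO.Sat H4E (some 2) (some 1) φ := by
  constructor
  · intro v
    refine ⟨fun h => absurd h (H4E_not_two _), fun h z => ?_⟩
    have : v = 1 := by fin_cases v <;> simp_all [H4E]
    rw [this]; exact H4E_one _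
  · intro φ
    constructor
    · exact lem2 φ _ _ (fun i => i.elim0)
    · exact lem1 φ _ _ (fun i => i.elim0)
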